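/- Let m ≥ 2 and let X₁, …, Xₘ be i.i.d. random variables with the Gamma(α, λ) distribution (α, λ > 0). Then the m-th Gini index IG_m = E[max{X₁,…,Xₘ} − min{X₁,…,Xₘ}]/(m·E[X₁]) equals (1/(m α Γ(α)^m)) · ( ∫₀^∞ (Γ(α)^m − γ(α,s)^m) ds − ∫₀^∞ Γ(α,s)^m ds ), where γ(α,s) = ∫₀^s t^{α−1} e^{−t} dt is the lower incomplete gamma function and Γ(α,s) = ∫_s^∞ t^{α−1} e^{−t} dt is the upper incomplete gamma function. -/

import Mathlib

open MeasureTheory ProbabilityTheory Set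
open scoped NNReal ENNReal

/-- The lower incomplete gamma function `γ(a, x) = ∫₀^x t^(a−1) e^(−t) dt`. -/
noncomputable def lowerIncompleteGamma (a x : ℝ) : ℝ :=
  ∫ t in Ioc (0 : ℝ) x, t ^ (a - 1) * Real.exp (-t)

/-- The upper incomplete gamma function `Γ(a, x) = ∫_x^∞ t^(a−1) e^(−t) dt`. -/
noncomputable def upperIncompleteGamma (a x : ℝ) : ℝ :=
  ∫ t in Ioi x, t ^ (a - 1) * Real.exp (-t)

namespace GiniAux

lemma integrableOn_f {a : ℝ} (ha : 0 < a) :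
    IntegrableOn (fun t : ℝ => t ^ (a - 1) * Real.exp (-t)) (Ioi 0) :=
  (Real.GammaIntegral_convergent ha).congr_fun (fun x _ => mul_comm _ _) measurableSet_Ioi

lemma lower_add_upper {a : ℝ} (ha : 0 < a) {x : ℝ} (hx : 0 ≤ x) :
    lowerIncompleteGamma a x + upperIncompleteGamma a x = Real.Gamma a := by
  rw [lowerIncompleteGamma, upperIncompleteGamma, Real.Gamma_eq_integral ha]
  rw [← setIntegral_union (Ioc_disjoint_Ioi le_rfl) measurableSet_Ioi
    ((integrableOn_f ha).mono_set Ioc_subset_Ioi_self)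
    ((integrableOn_f ha).mono_set (Ioi_subset_Ioi hx)), Ioc_union_Ioi_eq_Ioi hx]
  exact setIntegral_congr_fun measurableSet_Ioi fun t _ => mul_comm _ _

lemma gammaMeasure_Iic {α l : ℝ} (hα : 0 < α) (hl : 0 < l) {s : ℝ} (hs : 0 ≤ s) :
    ((gammaMeasure α l) (Iic s)).toReal = lowerIncompleteGamma α (l * s) / Real.Gamma α := by
  have : IsProbabilityMeasure (gammaMeasure α l) := isProbabilityMeasure_gammaMeasure hα hl
  have h1 : ((gammaMeasure α l) (Iic s)).toReal = cdf (gammaMeasure α l) s := by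
    rw [cdf_eq_real, measureReal_def]
  rw [h1, cdf_gammaMeasure_eq_integral hα hl]
  have h2 : ∫ x in Iic s, gammaPDFReal α l x = ∫ x in Ioc 0 s, gammaPDFReal α l x := by
    apply setIntegral_eq_of_subset_of_ae_diff_eq_zero measurableSet_Iic.nullMeasurableSet
      (fun x hx => hx.2)
    have hne : ∀ᵐ x : ℝ, x ≠ 0 := by
      rw [ae_iff]; simpa using measure_singleton (0:ℝ)
    filter_upwards [hne] with x hx0 hx
    have hxle : x ≤ 0 := by
      by_contra h
      push_neg at h
      exact hx.2 ⟨h, hx.1⟩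
    have : x < 0 := hxle.lt_of_ne hx0
    simp [gammaPDFReal, not_le.mpr this]
  rw [h2]
  have h3 : ∀ x ∈ Ioc (0:ℝ) s, gammaPDFReal α l x
      = (l ^ α / Real.Gamma α) * (x ^ (α - 1) * Real.exp (-(l * x))) := by
    intro x hx
    rw [gammaPDFReal, if_pos hx.1.le, mul_assoc]
  rw [setIntegral_congr_fun measurableSet_Ioc h3, ← intervalIntegral.integral_of_le hs,
    intervalIntegral.integral_const_mul]
  have h4 : ∫ x in (0:ℝ)..s, x ^ (α - 1) * Real.exp (-(l * x))
      = (l ^ (α - 1))⁻¹ * (l⁻¹ * lowerIncompleteGamma α (l * s)) := by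
    have h5 : ∀ x ∈ uIcc (0:ℝ) s, x ^ (α - 1) * Real.exp (-(l * x))
        = (l ^ (α - 1))⁻¹ * ((fun t : ℝ => t ^ (α - 1) * Real.exp (-t)) (l * x)) := by
      intro x hx
      rw [uIcc_of_le hs, mem_Icc] at hx
      simp only
      rw [Real.mul_rpow hl.le hx.1]
      field_simp [(Real.rpow_pos_of_pos hl (α - 1)).ne']
    rw [intervalIntegral.integral_congr h5, intervalIntegral.integral_const_mul,
      intervalIntegral.integral_comp_mul_left (fun t : ℝ => t ^ (α - 1) * Real.exp (-t)) hl.ne']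
    rw [mul_zero, smul_eq_mul, intervalIntegral.integral_of_le (by positivity),
      lowerIncompleteGamma]
  rw [h4]
  have hγ : l ^ (α - 1) * l = l ^ α := by
    rw [← Real.rpow_add_one hl.ne' (α - 1)]; ring_nf
  field_simp [(Real.rpow_pos_of_pos hl (α-1)).ne', (Real.Gamma_pos_of_pos hα).ne', hl.ne']
  rw [← hγ]

lemma gammaMeasure_Ioi {α l : ℝ} (hα : 0 < α) (hl : 0 < l) {s : ℝ} (hs : 0 ≤ s) :
    ((gammaMeasure α l) (Ioi s)).toReal = upperIncompleteGamma α (l * s) / Real.Gamma α := by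
  have : IsProbabilityMeasure (gammaMeasure α l) := isProbabilityMeasure_gammaMeasure hα hl
  have h1 : (Iic s)ᶜ = Ioi s := compl_Iic
  rw [← h1, prob_compl_eq_one_sub measurableSet_Iic,
    ENNReal.toReal_sub_of_le prob_le_one ENNReal.one_ne_top, ENNReal.toReal_one,
    gammaMeasure_Iic hα hl hs]
  have h2 := lower_add_upper hα (by positivity : (0:ℝ) ≤ l * s)
  have hΓ := Real.Gamma_pos_of_pos hα
  field_simp
  linarith
variable {α l : ℝ}

lemma gammaMeasure_eq : gammaMeasure α l
    = volume.withDensity (fun x => ((Real.toNNReal (gammaPDFReal α l x) : ℝ≥0) : ℝ≥0∞)) := rfl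

lemma ae_ne_zero : ∀ᵐ x : ℝ, x ≠ 0 := by
  rw [ae_iff]; simpa using measure_singleton (0:ℝ)

lemma pdf_mul_ae_zero_Iic (hα : 0 < α) (hl : 0 < l) :
    (fun x => gammaPDFReal α l x * x) =ᵐ[volume.restrict (Iic 0)] 0 := by
  rw [Filter.EventuallyEq, ae_restrict_iff' measurableSet_Iic]
  filter_upwards [ae_ne_zero] with x hx0 hx
  have : x < 0 := (hx : x ≤ 0).lt_of_ne hx0
  simp [gammaPDFReal, not_le.mpr this]

lemma pdf_mul_eq_Ioi (hα : 0 < α) (hl : 0 < l) :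
    ∀ x ∈ Ioi (0:ℝ), gammaPDFReal α l x * x
      = (l ^ α / Real.Gamma α) * (x ^ (α + 1 - 1) * Real.exp (-(l * x))) := by
  intro x hx
  have hx : (0:ℝ) < x := hx
  rw [gammaPDFReal, if_pos hx.le]
  have : x ^ (α + 1 - 1) = x ^ (α - 1) * x := by
    rw [show α + 1 - 1 = (α - 1) + 1 by ring, Real.rpow_add_one hx.ne']
  rw [this]; ring

lemma integrableOn_pdf_mul_Ioi (hα : 0 < α) (hl : 0 < l) :
    IntegrableOn (fun x => gammaPDFReal α l x * x) (Ioi 0) := by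
  have h := integrableOn_rpow_mul_exp_neg_mul_rpow
    (show (-1:ℝ) < α by linarith) zero_lt_one hl
  have h2 : IntegrableOn (fun x : ℝ => (l ^ α / Real.Gamma α)
      * (x ^ (α + 1 - 1) * Real.exp (-(l * x)))) (Ioi 0) := by
    refine IntegrableOn.congr_fun (h.const_mul (l ^ α / Real.Gamma α))
      (fun x hx => ?_) measurableSet_Ioi
    rw [show α + 1 - 1 = α by ring, Real.rpow_one, neg_mul]
  exact IntegrableOn.congr_fun h2 (fun x hx => (pdf_mul_eq_Ioi hα hl x hx).symm) measurableSet_Ioi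

lemma integrable_pdf_mul (hα : 0 < α) (hl : 0 < l) :
    Integrable (fun x => gammaPDFReal α l x * x) := by
  rw [← integrableOn_univ, ← Iic_union_Ioi (a := (0:ℝ))]
  refine IntegrableOn.union ?_ (integrableOn_pdf_mul_Ioi hα hl)
  exact (integrable_zero _ _ _).congr (pdf_mul_ae_zero_Iic hα hl).symm

lemma smul_eq_pdf_mul (hα : 0 < α) (hl : 0 < l) :
    (fun x : ℝ => Real.toNNReal (gammaPDFReal α l x) • x)
      = fun x => gammaPDFReal α l x * x := by
  funext x
  rw [NNReal.smul_def, Real.coe_toNNReal _ (gammaPDFReal_nonneg hα hl x), smul_eq_mul]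

lemma integrable_id_gammaMeasure (hα : 0 < α) (hl : 0 < l) :
    Integrable (fun x : ℝ => x) (gammaMeasure α l) := by
  rw [gammaMeasure_eq, integrable_withDensity_iff_integrable_smul
    ((measurable_gammaPDFReal α l).real_toNNReal)]
  rw [smul_eq_pdf_mul hα hl]
  exact integrable_pdf_mul hα hl

lemma integral_id_gammaMeasure (hα : 0 < α) (hl : 0 < l) :
    ∫ x, x ∂(gammaMeasure α l) = α / l := by
  rw [gammaMeasure_eq, integral_withDensity_eq_integral_smul
    ((measurable_gammaPDFReal α l).real_toNNReal), smul_eq_pdf_mul hα hl]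
  have hsplit : ∫ x, gammaPDFReal α l x * x
      = (∫ x in Iic (0:ℝ), gammaPDFReal α l x * x) + ∫ x in Ioi (0:ℝ), gammaPDFReal α l x * x := by
    rw [← setIntegral_union (Iic_disjoint_Ioi le_rfl) measurableSet_Ioi
      ((integrable_pdf_mul hα hl).integrableOn) ((integrable_pdf_mul hα hl).integrableOn),
      Iic_union_Ioi, setIntegral_univ]
  rw [hsplit, integral_eq_zero_of_ae (pdf_mul_ae_zero_Iic hα hl), zero_add,
    setIntegral_congr_fun measurableSet_Ioi (pdf_mul_eq_Ioi hα hl), integral_const_mul,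
    Real.integral_rpow_mul_exp_neg_mul_Ioi (by linarith : (0:ℝ) < α + 1) hl,
    Real.Gamma_add_one hα.ne']
  have h1 : (1/l) ^ (α+1) = (l ^ (α+1))⁻¹ := by
    rw [one_div, ← Real.inv_rpow hl.le]
  have h2 : l ^ (α + 1) = l ^ α * l := by
    rw [Real.rpow_add_one hl.ne']
  rw [h1, h2]
  have hΓ := Real.Gamma_pos_of_pos hα
  have hla := Real.rpow_pos_of_pos hl α
  field_simp

end GiniAux

/-- For i.i.d. `X₁,…,Xₘ` (`m ≥ 2`) with the `Gamma(α, λ)` distribution,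
the `m`-th Gini index `E[max − min]/(m E[X₁])` equals
`(1/(m α Γ(α)^m)) (∫₀^∞ (Γ(α)^m − γ(α,s)^m) ds − ∫₀^∞ Γ(α,s)^m ds)`. -/
theorem mth_Gini_index_gamma
    {Ω : Type*} [MeasureSpace Ω] [IsProbabilityMeasure (ℙ : Measure Ω)]
    (m : ℕ) (hm : 2 ≤ m) (α l : ℝ) (hα : 0 < α) (hl : 0 < l) (X : Fin m → Ω → ℝ)
    (hmeas : ∀ i, Measurable (X i))
    (hindep : iIndepFun X ℙ)
    (hident : ∀ i, Measure.map (X i) ℙ = gammaMeasure α l) :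
    (∫ ω, ((⨆ i, X i ω) - ⨅ i, X i ω) ∂ℙ) /
        (m * ∫ ω, X ⟨0, by omega⟩ ω ∂ℙ) =
      (1 / (m * α * Real.Gamma α ^ m)) *
        ((∫ s in Ioi (0 : ℝ), (Real.Gamma α ^ m - lowerIncompleteGamma α s ^ m)) -
          ∫ s in Ioi (0 : ℝ), upperIncompleteGamma α s ^ m) := by
  have hΓ := Real.Gamma_pos_of_pos hα
  have hΓm : (0:ℝ) < Real.Gamma α ^ m := pow_pos hΓ m
  haveI : Nonempty (Fin m) := ⟨⟨0, by omega⟩⟩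
  haveI hPG : IsProbabilityMeasure (gammaMeasure α l) := isProbabilityMeasure_gammaMeasure hα hl
  set i0 : Fin m := ⟨0, by omega⟩ with hi0
  -- integrability of each X i
  have hXint : ∀ i, Integrable (X i) ℙ := by
    intro i
    have h := GiniAux.integrable_id_gammaMeasure (l := l) hα hl
    rw [← hident i] at h
    simpa [Function.comp] using
      (integrable_map_measure aestronglyMeasurable_id (hmeas i).aemeasurable).mp h
  -- mean
  have hmean : ∫ ω, X i0 ω ∂ℙ = α / l := by
    have h : ∫ y, y ∂(Measure.map (X i0) ℙ) = ∫ ω, X i0 ω ∂ℙ :=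
      integral_map (hmeas i0).aemeasurable aestronglyMeasurable_id
    rw [hident i0, GiniAux.integral_id_gammaMeasure hα hl] at h
    exact h.symm
  -- a.s. nonnegativity
  have hpos : ∀ i, ∀ᵐ ω ∂ℙ, 0 ≤ X i ω := by
    intro i
    have h0 : ℙ (X i ⁻¹' Iio 0) = 0 := by
      rw [← Measure.map_apply (hmeas i) measurableSet_Iio, hident i, gammaMeasure,
        withDensity_apply _ measurableSet_Iio, lintegral_gammaPDF_of_nonpos le_rfl]
    rw [ae_iff]
    convert h0 using 2
    ext ω; simp [not_le]
  -- measurability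
  have hFmeas : Measurable (fun ω => ⨆ i, X i ω) := Measurable.iSup hmeas
  have hGmeas : Measurable (fun ω => ⨅ i, X i ω) := Measurable.iInf hmeas
  -- integrability of sup and inf
  have hsum : Integrable (fun ω => ∑ i, |X i ω|) ℙ :=
    integrable_finset_sum Finset.univ (fun i _ => (hXint i).abs)
  have hFint : Integrable (fun ω => ⨆ i, X i ω) ℙ := by
    refine hsum.mono' hFmeas.aestronglyMeasurable (ae_of_all _ fun ω => ?_)
    rw [Real.norm_eq_abs, abs_le]
    constructor
    · refine le_trans ?_ (le_ciSup (f := fun i => X i ω) (Set.Finite.bddAbove (finite_range _)) i0)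
      refine le_trans (neg_le_neg ?_) (neg_abs_le (X i0 ω))
      exact Finset.single_le_sum (f := fun j => |X j ω|) (fun j _ => abs_nonneg _) (Finset.mem_univ i0)
    · exact ciSup_le fun i => le_trans (le_abs_self _)
        (Finset.single_le_sum (f := fun j => |X j ω|) (fun j _ => abs_nonneg _) (Finset.mem_univ i))
  have hGint : Integrable (fun ω => ⨅ i, X i ω) ℙ := by
    refine hsum.mono' hGmeas.aestronglyMeasurable (ae_of_all _ fun ω => ?_)
    rw [Real.norm_eq_abs, abs_le]
    constructor
    · refine le_ciInf fun i => ?_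
      refine le_trans (neg_le_neg ?_) (neg_abs_le (X i ω))
      exact Finset.single_le_sum (f := fun j => |X j ω|) (fun j _ => abs_nonneg _) (Finset.mem_univ i)
    · refine le_trans (ciInf_le (f := fun i => X i ω) (Set.Finite.bddBelow (finite_range _)) i0) ?_
      exact le_trans (le_abs_self _)
        (Finset.single_le_sum (f := fun j => |X j ω|) (fun j _ => abs_nonneg _) (Finset.mem_univ i0))
  -- a.e. nonnegativity of sup and inf
  have hFnn : 0 ≤ᵐ[ℙ] fun ω => ⨆ i, X i ω := by
    filter_upwards [hpos i0] with ω h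
    exact le_trans h (le_ciSup (f := fun i => X i ω) (Set.Finite.bddAbove (finite_range _)) i0)
  have hGnn : 0 ≤ᵐ[ℙ] fun ω => ⨅ i, X i ω := by
    filter_upwards [ae_all_iff.mpr hpos] with ω h
    exact le_ciInf fun i => h i
  -- tail probabilities
  have hmap : ∀ (i : Fin m) (B : Set ℝ), MeasurableSet B →
      ℙ (X i ⁻¹' B) = gammaMeasure α l B := fun i B hB => by
    rw [← Measure.map_apply (hmeas i) hB, hident i]
  have htailF : ∀ s : ℝ, 0 ≤ s → (ℙ {ω | s < ⨆ i, X i ω}).toReal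
      = (Real.Gamma α ^ m)⁻¹ *
        (Real.Gamma α ^ m - lowerIncompleteGamma α (l * s) ^ m) := by
    intro s hs
    have hset : {ω | (⨆ i, X i ω) ≤ s} = ⋂ i, X i ⁻¹' Iic s := by
      ext ω
      simp only [mem_setOf_eq, mem_iInter, mem_preimage, mem_Iic]
      exact ciSup_le_iff (Set.Finite.bddAbove (finite_range _))
    have hprod : ℙ {ω | (⨆ i, X i ω) ≤ s} = (gammaMeasure α l (Iic s)) ^ m := by
      rw [hset, hindep.meas_iInter (fun i => ⟨Iic s, measurableSet_Iic, rfl⟩)]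
      simp [hmap _ _ measurableSet_Iic, Finset.prod_const, Finset.card_univ]
    have hcompl : {ω | s < ⨆ i, X i ω} = {ω | (⨆ i, X i ω) ≤ s}ᶜ := by
      ext ω; simp [not_le]
    rw [hcompl, prob_compl_eq_one_sub (measurableSet_le hFmeas measurable_const), hprod,
      ENNReal.toReal_sub_of_le (pow_le_one' prob_le_one m) ENNReal.one_ne_top,
      ENNReal.toReal_one, ENNReal.toReal_pow, GiniAux.gammaMeasure_Iic hα hl hs, div_pow]
    field_simp
  have htailG : ∀ s : ℝ, 0 ≤ s → (ℙ {ω | s < ⨅ i, X i ω}).toReal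
      = (Real.Gamma α ^ m)⁻¹ * upperIncompleteGamma α (l * s) ^ m := by
    intro s hs
    have hset : {ω | s < ⨅ i, X i ω} = ⋂ i, X i ⁻¹' Ioi s := by
      ext ω
      simp only [mem_setOf_eq, mem_iInter, mem_preimage, mem_Ioi]
      rw [← Finset.inf'_univ_eq_ciInf, Finset.lt_inf'_iff]
      simp
    have hprod : ℙ {ω | s < ⨅ i, X i ω} = (gammaMeasure α l (Ioi s)) ^ m := by
      rw [hset, hindep.meas_iInter (fun i => ⟨Ioi s, measurableSet_Ioi, rfl⟩)]
      simp [hmap _ _ measurableSet_Ioi, Finset.prod_const, Finset.card_univ]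
    rw [hprod, ENNReal.toReal_pow, GiniAux.gammaMeasure_Ioi hα hl hs, div_pow]
    field_simp
  -- layer cake
  have hEmax : ∫ ω, (⨆ i, X i ω) ∂ℙ
      = ∫ t in Ioi (0:ℝ), (ℙ {ω | t < ⨆ i, X i ω}).toReal :=
    hFint.integral_eq_integral_meas_lt hFnn
  have hEmin : ∫ ω, (⨅ i, X i ω) ∂ℙ
      = ∫ t in Ioi (0:ℝ), (ℙ {ω | t < ⨅ i, X i ω}).toReal :=
    hGint.integral_eq_integral_meas_lt hGnn
  -- outer integrals
  have hI1 : ∫ t in Ioi (0:ℝ), (ℙ {ω | t < ⨆ i, X i ω}).toReal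
      = (Real.Gamma α ^ m)⁻¹ * (l⁻¹ *
        ∫ s in Ioi (0:ℝ), (Real.Gamma α ^ m - lowerIncompleteGamma α s ^ m)) := by
    have e1 : ∀ t ∈ Ioi (0:ℝ), (ℙ {ω | t < ⨆ i, X i ω}).toReal
        = (Real.Gamma α ^ m)⁻¹ *
          ((fun u => Real.Gamma α ^ m - lowerIncompleteGamma α u ^ m) (l * t)) :=
      fun t ht => htailF t (le_of_lt ht)
    rw [setIntegral_congr_fun measurableSet_Ioi e1, integral_const_mul,
      integral_comp_mul_left_Ioi (fun u => Real.Gamma α ^ m - lowerIncompleteGamma α u ^ m)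
        0 hl, mul_zero, smul_eq_mul]
  have hI2 : ∫ t in Ioi (0:ℝ), (ℙ {ω | t < ⨅ i, X i ω}).toReal
      = (Real.Gamma α ^ m)⁻¹ * (l⁻¹ *
        ∫ s in Ioi (0:ℝ), upperIncompleteGamma α s ^ m) := by
    have e2 : ∀ t ∈ Ioi (0:ℝ), (ℙ {ω | t < ⨅ i, X i ω}).toReal
        = (Real.Gamma α ^ m)⁻¹ * ((fun u => upperIncompleteGamma α u ^ m) (l * t)) :=
      fun t ht => htailG t (le_of_lt ht)
    rw [setIntegral_congr_fun measurableSet_Ioi e2, integral_const_mul,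
      integral_comp_mul_left_Ioi (fun u => upperIncompleteGamma α u ^ m) 0 hl,
      mul_zero, smul_eq_mul]
  -- put everything together
  rw [integral_sub hFint hGint, hEmax, hEmin, hI1, hI2, hmean]
  have hm0 : (m:ℝ) ≠ 0 := by
    have : (0:ℝ) < m := by exact_mod_cast (show 0 < m by omega)
    exact this.ne'
  field_simp
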